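/- Let G be a finite simple graph on n vertices and σ any bijection from V(G) to [n]. Let C_{G,σ} be the set of open intervals (σ(u), σ(v)) over all edges {u,v} of G with σ(u) < σ(v), partially ordered by (a,b) ⊲ (c,d) iff b ≤ c, and let dim(C_{G,σ}) be its order dimension. Then π(G^{1/2}) ≤ dim(C_{G,σ}) + 2, where G^{1/2} is the graph obtained from G by subdividing every edge once. -/

import Mathlib

/-- Pairwise suitable family of linear orders (injective rank functions). -/
def SepFamily {V : Type*} (G : SimpleGraph V) {m : ℕ} (F : Fin m → V → ℕ) : Prop :=
  (∀ i, Function.Injective (F i)) ∧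
  ∀ a b c d : V, G.Adj a b → G.Adj c d → a ≠ c → a ≠ d → b ≠ c → b ≠ d →
    ∃ i, (F i a < F i c ∧ F i a < F i d ∧ F i b < F i c ∧ F i b < F i d) ∨
         (F i c < F i a ∧ F i d < F i a ∧ F i c < F i b ∧ F i d < F i b)

/-- The separation dimension of `G`. -/
noncomputable def sepDim {V : Type*} (G : SimpleGraph V) : ℕ :=
  sInf {m : ℕ | ∃ F : Fin m → V → ℕ, SepFamily G F}

/-- The graph `G^{1/2}` obtained from `G` by subdividing every edge once:
one new vertex for each edge of `G`, adjacent exactly to the two ends of that edge. -/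
def subdiv {V : Type*} (G : SimpleGraph V) : SimpleGraph (V ⊕ ↥G.edgeSet) :=
  SimpleGraph.fromRel fun x y => ∃ (u : V) (e : G.edgeSet),
    x = Sum.inl u ∧ y = Sum.inr e ∧ u ∈ (e : Sym2 V)

/-- A realizer of size `m` of a (strict) partial order `r`: a family of `m` linear
extensions (given as injective rank functions) whose intersection is exactly `r`. -/
def IsRealizer {α : Type*} (r : α → α → Prop) {m : ℕ} (L : Fin m → α → ℕ) : Prop :=
  (∀ i, Function.Injective (L i)) ∧ ∀ x y, r x y ↔ (x ≠ y ∧ ∀ i, L i x < L i y)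

/-- The order dimension of a (strict) partial order `r`: the minimum size of a realizer. -/
noncomputable def orderDim {α : Type*} (r : α → α → Prop) : ℕ :=
  sInf {m : ℕ | ∃ L : Fin m → α → ℕ, IsRealizer r L}

/-- The collection `C_{G,σ}` of open intervals `(σ u, σ v)` over edges `{u,v}` of `G`
with `σ u < σ v`. -/
def CIdx {V : Type*} [Fintype V] (G : SimpleGraph V) (σ : V ≃ Fin (Fintype.card V)) :=
  {p : Fin (Fintype.card V) × Fin (Fintype.card V) //
    ∃ u v : V, G.Adj u v ∧ σ u < σ v ∧ p = (σ u, σ v)}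

/-- The interval order on `C_{G,σ}`: `(a,b) ⊲ (c,d)` iff `b ≤ c`. -/
def CRel {V : Type*} [Fintype V] (G : SimpleGraph V) (σ : V ≃ Fin (Fintype.card V))
    (x y : CIdx G σ) : Prop := x.val.2 ≤ y.val.1

section RealizerExists

variable {α : Type*}

lemma rank_of_linear [Fintype α] (s : α → α → Prop) (hs : IsLinearOrder α s) :
    ∃ g : α → ℕ, Function.Injective g ∧ ∀ x y, s x y → x ≠ y → g x < g y := by
  classical
  have htrans : ∀ {x y z}, s x y → s y z → s x z :=
    fun hxy hyz => hs.toIsPartialOrder.toIsPreorder.toIsTrans.trans _ _ _ hxy hyz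
  have hanti : ∀ {x y}, s x y → s y x → x = y :=
    fun hxy hyx => hs.toIsPartialOrder.toAntisymm.antisymm _ _ hxy hyx
  have htot : ∀ x y, s x y ∨ s y x := fun x y => hs.toTotal.total x y
  set g : α → ℕ := fun x => (Finset.univ.filter fun y => s y x ∧ y ≠ x).card with hg
  have key : ∀ x y, s x y → x ≠ y → g x < g y := by
    intro x y hxy hne
    apply Finset.card_lt_card
    have hsub : (Finset.univ.filter fun z => s z x ∧ z ≠ x) ⊆
        (Finset.univ.filter fun z => s z y ∧ z ≠ y) := by
      intro z hz
      simp only [Finset.mem_filter, Finset.mem_univ, true_and] at hz ⊢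
      refine ⟨htrans hz.1 hxy, ?_⟩
      rintro rfl
      exact hne (hanti hxy hz.1)
    rw [Finset.ssubset_iff_of_subset hsub]
    refine ⟨x, ?_, ?_⟩
    · simp only [Finset.mem_filter, Finset.mem_univ, true_and]
      exact ⟨hxy, hne⟩
    · simp
  refine ⟨g, ?_, key⟩
  intro x y hxy
  by_contra hne
  rcases htot x y with h | h
  · exact absurd hxy (Nat.ne_of_lt (key x y h hne))
  · exact absurd hxy.symm (Nat.ne_of_lt (key y x h (Ne.symm hne)))

lemma exists_strict_ext [Fintype α] (t : α → α → Prop)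
    (hirr : ∀ x, ¬ t x x) (htr : ∀ {x y z}, t x y → t y z → t x z) :
    ∃ g : α → ℕ, Function.Injective g ∧ ∀ x y, t x y → g x < g y := by
  classical
  set t' : α → α → Prop := fun x y => t x y ∨ x = y with ht'
  haveI : IsPartialOrder α t' :=
    { refl := fun x => Or.inr rfl
      trans := by
        rintro x y z (h | rfl) (h' | rfl)
        · exact Or.inl (htr h h')
        · exact Or.inl h
        · exact Or.inl h'
        · exact Or.inr rfl
      antisymm := by
        intro x y h1 h2
        rcases h1 with h1 | h1
        · rcases h2 with h2 | h2
          · exact absurd (htr h1 h2) (hirr x)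
          · exact h2.symm
        · exact h1 }
  obtain ⟨s, hs, hsub⟩ := extend_partialOrder t'
  obtain ⟨g, hg1, hg2⟩ := rank_of_linear s hs
  refine ⟨g, hg1, fun x y h => hg2 x y (hsub _ _ (Or.inl h)) ?_⟩
  rintro rfl
  exact hirr x h

lemma exists_realizer [Finite α] (r : α → α → Prop)
    (hirr : ∀ x, ¬ r x x) (htr : ∀ {x y z}, r x y → r y z → r x z) :
    ∃ m, ∃ L : Fin m → α → ℕ, IsRealizer r L := by
  classical
  haveI := Fintype.ofFinite α
  set P := {p : α × α // ¬ r p.1 p.2 ∧ p.1 ≠ p.2} with hP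
  haveI : Fintype P := Fintype.ofFinite _
  have hext : ∀ p : P, ∃ g : α → ℕ, Function.Injective g ∧ (∀ x y, r x y → g x < g y) ∧
      g p.val.2 < g p.val.1 := by
    rintro ⟨⟨a, b⟩, hab, hne⟩
    set t : α → α → Prop := fun x y => r x y ∨ ((x = b ∨ r x b) ∧ (a = y ∨ r a y)) with ht
    have hti : ∀ x, ¬ t x x := by
      rintro x (h | ⟨h1 | h1, h2 | h2⟩)
      · exact hirr x h
      · exact hne (h2.trans h1)
      · exact hab (h1 ▸ h2)
      · exact hab (h2.symm ▸ h1)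
      · exact hab (htr h2 h1)
    have htt : ∀ {x y z}, t x y → t y z → t x z := by
      rintro x y z (h | ⟨h1, h2⟩) (h' | ⟨h1', h2'⟩)
      · exact Or.inl (htr h h')
      · refine Or.inr ⟨?_, h2'⟩
        rcases h1' with rfl | h1'
        · exact Or.inr h
        · exact Or.inr (htr h h1')
      · refine Or.inr ⟨h1, ?_⟩
        rcases h2 with rfl | h2
        · exact Or.inr h'
        · exact Or.inr (htr h2 h')
      · exact Or.inr ⟨h1, h2'⟩
    obtain ⟨g, hg1, hg2⟩ := exists_strict_ext t hti htt
    exact ⟨g, hg1, fun x y h => hg2 _ _ (Or.inl h),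
      hg2 _ _ (Or.inr ⟨Or.inl rfl, Or.inl rfl⟩)⟩
  choose gp hgp1 hgp2 hgp3 using hext
  obtain ⟨g0, hg01, hg02⟩ := exists_strict_ext r hirr @htr
  set K := Fintype.card P with hK
  set eP := Fintype.equivFin P with heP
  refine ⟨K + 1, fun i => Fin.lastCases g0 (fun j => gp (eP.symm j)) i, ?_, ?_⟩
  · intro i
    induction i using Fin.lastCases with
    | last => simpa using hg01
    | cast j => simpa using hgp1 _
  · intro x y
    constructor
    · intro hxy
      refine ⟨fun e => hirr x (e ▸ hxy), fun i => ?_⟩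
      induction i using Fin.lastCases with
      | last => simpa using hg02 _ _ hxy
      | cast j => simpa using hgp2 _ _ _ hxy
    · rintro ⟨hne, hall⟩
      by_contra hnr
      set p : P := ⟨(x, y), hnr, hne⟩ with hp
      have hi := hall (Fin.castSucc (eP p))
      simp only [Fin.lastCases_castSucc, Equiv.symm_apply_apply] at hi
      exact absurd hi (not_lt.mpr (le_of_lt (hgp3 p)))

end RealizerExists

section Blocks

lemma blk_le_mul {A q1 q2 r1 : ℕ} (h : q1 < q2) (hr : r1 < A) : A * q1 + r1 < A * q2 := by
  have h1 : A * q1 + r1 < A * (q1 + 1) := by rw [Nat.mul_succ]; omega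
  exact lt_of_lt_of_le h1 (Nat.mul_le_mul le_rfl h)

lemma blk_lt {A q1 q2 r1 r2 : ℕ} (h : q1 < q2) (hr : r1 < A) :
    A * q1 + r1 < A * q2 + r2 := lt_of_lt_of_le (blk_le_mul h hr) (Nat.le_add_right _ _)

lemma mul_blk_lt {A q1 q2 r2 : ℕ} (h : q1 < q2) (hA : 0 < A) : A * q1 < A * q2 + r2 := by
  have := blk_lt (A := A) (r1 := 0) (r2 := r2) h hA
  simpa using this

lemma mul_mul_lt {A q1 q2 : ℕ} (h : q1 < q2) (hA : 0 < A) : A * q1 < A * q2 := by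
  have := blk_le_mul (A := A) (r1 := 0) h hA
  simpa using this

lemma blk_le_lt {A q1 q2 r2 : ℕ} (h : q1 ≤ q2) (hr : 0 < r2) : A * q1 < A * q2 + r2 :=
  lt_of_le_of_lt (Nat.mul_le_mul le_rfl h) (by omega)

lemma blk_eq {A q1 q2 r1 r2 : ℕ} (h1 : r1 < A) (h2 : r2 < A)
    (h : A * q1 + r1 = A * q2 + r2) : q1 = q2 ∧ r1 = r2 := by
  have hA : 0 < A := by omega
  have e1 : (A * q1 + r1) / A = q1 := by
    rw [Nat.mul_add_div hA, Nat.div_eq_of_lt h1, add_zero]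
  have e2 : (A * q2 + r2) / A = q2 := by
    rw [Nat.mul_add_div hA, Nat.div_eq_of_lt h2, add_zero]
  have hq : q1 = q2 := by rw [← e1, ← e2, h]
  subst hq
  exact ⟨rfl, by omega⟩

end Blocks

section Graph

variable {V : Type*} [Fintype V] (G : SimpleGraph V) (σ : V ≃ Fin (Fintype.card V))

noncomputable local instance : Fintype G.edgeSet := Fintype.ofFinite _

def ivl (e : G.edgeSet) : Fin (Fintype.card V) × Fin (Fintype.card V) :=
  Sym2.lift ⟨fun u v => (min (σ u) (σ v), max (σ u) (σ v)), fun u v => by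
    simp [min_comm, max_comm]⟩ (e : Sym2 V)

lemma ivl_spec (e : G.edgeSet) :
    ∃ u v : V, G.Adj u v ∧ σ u < σ v ∧ ivl G σ e = (σ u, σ v) ∧ (e : Sym2 V) = s(u, v) := by
  obtain ⟨q, hq⟩ := e
  revert hq
  induction q using Sym2.ind with
  | _ x y =>
    intro hq
    rw [SimpleGraph.mem_edgeSet] at hq
    have hne : σ x ≠ σ y := fun h => hq.ne (σ.injective h)
    rcases hne.lt_or_gt with h | h
    · exact ⟨x, y, hq, h, by simp [ivl, min_eq_left h.le, max_eq_right h.le], rfl⟩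
    · exact ⟨y, x, hq.symm, h, by simp [ivl, min_eq_right h.le, max_eq_left h.le], Sym2.eq_swap⟩

lemma ivl_lt (e : G.edgeSet) : (ivl G σ e).1 < (ivl G σ e).2 := by
  obtain ⟨u, v, _, h, h2, _⟩ := ivl_spec G σ e
  rw [h2]
  exact h

lemma ivl_mem (e : G.edgeSet) (u : V) (hu : u ∈ (e : Sym2 V)) :
    σ u = (ivl G σ e).1 ∨ σ u = (ivl G σ e).2 := by
  obtain ⟨a, b, _, _, h2, h3⟩ := ivl_spec G σ e
  rw [h3, Sym2.mem_iff] at hu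
  rw [h2]
  rcases hu with rfl | rfl
  · exact Or.inl rfl
  · exact Or.inr rfl

lemma ivl_inj : Function.Injective (ivl G σ) := by
  intro e f h
  obtain ⟨a, b, _, _, h2, h3⟩ := ivl_spec G σ e
  obtain ⟨c, d, _, _, h5, h6⟩ := ivl_spec G σ f
  rw [h2, h5, Prod.mk.injEq] at h
  have hac : a = c := σ.injective h.1
  have hbd : b = d := σ.injective h.2
  apply Subtype.ext
  rw [h3, h6, hac, hbd]

def φmap (e : G.edgeSet) : CIdx G σ :=
  ⟨ivl G σ e, by
    obtain ⟨u, v, h1, h2, h3, _⟩ := ivl_spec G σ e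
    exact ⟨u, v, h1, h2, h3⟩⟩

lemma φmap_inj : Function.Injective (φmap G σ) := by
  intro e f h
  exact ivl_inj G σ (congrArg Subtype.val h)

lemma cidx_lt (x : CIdx G σ) : x.val.1 < x.val.2 := by
  obtain ⟨u, v, _, h, hp⟩ := x.prop
  rw [hp]
  exact h

end Graph

section Ranks

variable {V : Type*} [Fintype V] (G : SimpleGraph V) (σ : V ≃ Fin (Fintype.card V))

noncomputable local instance : Fintype G.edgeSet := Fintype.ofFinite _

/-- rank function: line order, subdivision vertices near left ends,
ties broken by decreasing right end. -/
def rkXL : V ⊕ G.edgeSet → ℕ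
  | Sum.inl x => 2 * Fintype.card V * (σ x : ℕ)
  | Sum.inr g => 2 * Fintype.card V * ((ivl G σ g).1 : ℕ) +
      (2 * Fintype.card V - 1 - ((ivl G σ g).2 : ℕ))

/-- rank function: line order, subdivision vertices near right ends,
ties broken by decreasing left end. -/
def rkXR : V ⊕ G.edgeSet → ℕ
  | Sum.inl x => 2 * Fintype.card V * (σ x : ℕ)
  | Sum.inr g => 2 * Fintype.card V * (((ivl G σ g).2 : ℕ) - 1) +
      (2 * Fintype.card V - 1 - ((ivl G σ g).1 : ℕ))

/-- maximal (shifted) value of `ℓ` over intervals ending at or before `p`. -/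
noncomputable def mxE (ℓ : CIdx G σ → ℕ) (p : ℕ) : ℕ :=
  Finset.univ.sup fun h : G.edgeSet =>
    if ((ivl G σ h).2 : ℕ) ≤ p then ℓ (φmap G σ h) + 1 else 0

/-- rank function built from a linear extension `ℓ` of the interval order. -/
noncomputable def rkO (ℓ : CIdx G σ → ℕ) : V ⊕ G.edgeSet → ℕ
  | Sum.inl x => 2 * Fintype.card V * mxE G σ ℓ (σ x : ℕ) + (2 * (σ x : ℕ) + 1)
  | Sum.inr g => 2 * Fintype.card V * (ℓ (φmap G σ g) + 1)

lemma mxE_le (ℓ : CIdx G σ → ℕ) (p : ℕ) (K : ℕ)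
    (hK : ∀ h : G.edgeSet, ((ivl G σ h).2 : ℕ) ≤ p → ℓ (φmap G σ h) + 1 ≤ K) :
    mxE G σ ℓ p ≤ K := by
  apply Finset.sup_le
  intro h _
  by_cases hc : ((ivl G σ h).2 : ℕ) ≤ p
  · rw [if_pos hc]; exact hK h hc
  · rw [if_neg hc]; exact Nat.zero_le _

lemma mxE_ge (ℓ : CIdx G σ → ℕ) (p : ℕ) (h : G.edgeSet) (hc : ((ivl G σ h).2 : ℕ) ≤ p) :
    ℓ (φmap G σ h) + 1 ≤ mxE G σ ℓ p := by
  have := Finset.le_sup (f := fun h : G.edgeSet =>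
    if ((ivl G σ h).2 : ℕ) ≤ p then ℓ (φmap G σ h) + 1 else 0) (Finset.mem_univ h)
  simp only [if_pos hc] at this
  exact this

lemma rkXL_inj : Function.Injective (rkXL G σ) := by
  rintro (a | g) (b | h) hh
  · have hn : 0 < Fintype.card V := (σ a).pos
    simp only [rkXL] at hh
    have := Nat.eq_of_mul_eq_mul_left (by omega : 0 < 2 * Fintype.card V) hh
    exact congrArg Sum.inl (σ.injective (Fin.ext this))
  · exfalso
    have hn : 0 < Fintype.card V := (σ a).pos
    have h2 : ((ivl G σ h).2 : ℕ) < Fintype.card V := ((ivl G σ h).2).isLt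
    simp only [rkXL] at hh
    have hh' : 2 * Fintype.card V * (σ a : ℕ) + 0 =
        2 * Fintype.card V * ((ivl G σ h).1 : ℕ) +
        (2 * Fintype.card V - 1 - ((ivl G σ h).2 : ℕ)) := by omega
    have := (blk_eq (by omega) (by omega) hh').2
    omega
  · exfalso
    have hn : 0 < Fintype.card V := (σ b).pos
    have h2 : ((ivl G σ g).2 : ℕ) < Fintype.card V := ((ivl G σ g).2).isLt
    simp only [rkXL] at hh
    have hh' : 2 * Fintype.card V * ((ivl G σ g).1 : ℕ) +
        (2 * Fintype.card V - 1 - ((ivl G σ g).2 : ℕ)) =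
        2 * Fintype.card V * (σ b : ℕ) + 0 := by omega
    have := (blk_eq (by omega) (by omega) hh').2
    omega
  · have hn : 0 < Fintype.card V := ((ivl G σ g).1).pos
    have h2 : ((ivl G σ g).2 : ℕ) < Fintype.card V := ((ivl G σ g).2).isLt
    have h2' : ((ivl G σ h).2 : ℕ) < Fintype.card V := ((ivl G σ h).2).isLt
    simp only [rkXL] at hh
    obtain ⟨hq, hr⟩ := blk_eq (by omega) (by omega) hh
    have e1 : (ivl G σ g).1 = (ivl G σ h).1 := Fin.ext hq
    have e2 : (ivl G σ g).2 = (ivl G σ h).2 := Fin.ext (by omega)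
    exact congrArg Sum.inr (ivl_inj G σ (Prod.ext e1 e2))

lemma rkXR_inj : Function.Injective (rkXR G σ) := by
  rintro (a | g) (b | h) hh
  · have hn : 0 < Fintype.card V := (σ a).pos
    simp only [rkXR] at hh
    have := Nat.eq_of_mul_eq_mul_left (by omega : 0 < 2 * Fintype.card V) hh
    exact congrArg Sum.inl (σ.injective (Fin.ext this))
  · exfalso
    have hn : 0 < Fintype.card V := (σ a).pos
    have h1 : ((ivl G σ h).1 : ℕ) < Fintype.card V := ((ivl G σ h).1).isLt
    simp only [rkXR] at hh
    have hh' : 2 * Fintype.card V * (σ a : ℕ) + 0 =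
        2 * Fintype.card V * (((ivl G σ h).2 : ℕ) - 1) +
        (2 * Fintype.card V - 1 - ((ivl G σ h).1 : ℕ)) := by omega
    have := (blk_eq (by omega) (by omega) hh').2
    omega
  · exfalso
    have hn : 0 < Fintype.card V := (σ b).pos
    have h1 : ((ivl G σ g).1 : ℕ) < Fintype.card V := ((ivl G σ g).1).isLt
    simp only [rkXR] at hh
    have hh' : 2 * Fintype.card V * (((ivl G σ g).2 : ℕ) - 1) +
        (2 * Fintype.card V - 1 - ((ivl G σ g).1 : ℕ)) =
        2 * Fintype.card V * (σ b : ℕ) + 0 := by omega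
    have := (blk_eq (by omega) (by omega) hh').2
    omega
  · have hn : 0 < Fintype.card V := ((ivl G σ g).1).pos
    have h1 : ((ivl G σ g).1 : ℕ) < Fintype.card V := ((ivl G σ g).1).isLt
    have h1' : ((ivl G σ h).1 : ℕ) < Fintype.card V := ((ivl G σ h).1).isLt
    have hg2 : 0 < ((ivl G σ g).2 : ℕ) := lt_of_le_of_lt (Nat.zero_le _) (ivl_lt G σ g)
    have hh2 : 0 < ((ivl G σ h).2 : ℕ) := lt_of_le_of_lt (Nat.zero_le _) (ivl_lt G σ h)
    simp only [rkXR] at hh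
    obtain ⟨hq, hr⟩ := blk_eq (by omega) (by omega) hh
    have e1 : (ivl G σ g).1 = (ivl G σ h).1 := Fin.ext (by omega)
    have e2 : (ivl G σ g).2 = (ivl G σ h).2 := Fin.ext (by omega)
    exact congrArg Sum.inr (ivl_inj G σ (Prod.ext e1 e2))

lemma rkO_inj (ℓ : CIdx G σ → ℕ) (hℓ : Function.Injective ℓ) :
    Function.Injective (rkO G σ ℓ) := by
  rintro (a | g) (b | h) hh
  · have hn : 0 < Fintype.card V := (σ a).pos
    have ha : (σ a : ℕ) < Fintype.card V := (σ a).isLt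
    have hb : (σ b : ℕ) < Fintype.card V := (σ b).isLt
    simp only [rkO] at hh
    have := (blk_eq (by omega) (by omega) hh).2
    exact congrArg Sum.inl (σ.injective (Fin.ext (by omega)))
  · exfalso
    have hn : 0 < Fintype.card V := (σ a).pos
    have ha : (σ a : ℕ) < Fintype.card V := (σ a).isLt
    simp only [rkO] at hh
    have hh' : 2 * Fintype.card V * mxE G σ ℓ (σ a : ℕ) + (2 * (σ a : ℕ) + 1) =
        2 * Fintype.card V * (ℓ (φmap G σ h) + 1) + 0 := by omega
    have := (blk_eq (by omega) (by omega) hh').2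
    omega
  · exfalso
    have hn : 0 < Fintype.card V := (σ b).pos
    have hb : (σ b : ℕ) < Fintype.card V := (σ b).isLt
    simp only [rkO] at hh
    have hh' : 2 * Fintype.card V * (ℓ (φmap G σ g) + 1) + 0 =
        2 * Fintype.card V * mxE G σ ℓ (σ b : ℕ) + (2 * (σ b : ℕ) + 1) := by omega
    have := (blk_eq (by omega) (by omega) hh').2
    omega
  · have hn : 0 < Fintype.card V := ((ivl G σ g).1).pos
    simp only [rkO] at hh
    have := Nat.eq_of_mul_eq_mul_left (by omega : 0 < 2 * Fintype.card V) hh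
    have : ℓ (φmap G σ g) = ℓ (φmap G σ h) := by omega
    exact congrArg Sum.inr (φmap_inj G σ (hℓ this))

end Ranks

section Seps

variable {V : Type*} [Fintype V] (G : SimpleGraph V) (σ : V ≃ Fin (Fintype.card V))

noncomputable local instance : Fintype G.edgeSet := Fintype.ofFinite _

lemma sepXL (u v : V) (e f : G.edgeSet) (hu : u ∈ (e : Sym2 V))
    (hσ : σ u < σ v) (hvc : σ v = (ivl G σ f).1) :
    rkXL G σ (Sum.inl u) < rkXL G σ (Sum.inl v) ∧
    rkXL G σ (Sum.inl u) < rkXL G σ (Sum.inr f) ∧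
    rkXL G σ (Sum.inr e) < rkXL G σ (Sum.inl v) ∧
    rkXL G σ (Sum.inr e) < rkXL G σ (Sum.inr f) := by
  have hn : 0 < Fintype.card V := (σ u).pos
  have hab : ((ivl G σ e).1 : ℕ) < ((ivl G σ e).2 : ℕ) := ivl_lt G σ e
  have hbn : ((ivl G σ e).2 : ℕ) < Fintype.card V := ((ivl G σ e).2).isLt
  have ha : ((ivl G σ e).1 : ℕ) ≤ (σ u : ℕ) := by
    rcases ivl_mem G σ e u hu with h | h
    · rw [← h]
    · rw [← h] at hab; omega
  have hsuv : (σ u : ℕ) < (σ v : ℕ) := hσ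
  have hc : (σ v : ℕ) = ((ivl G σ f).1 : ℕ) := congrArg Fin.val hvc
  refine ⟨?_, ?_, ?_, ?_⟩
  · exact mul_mul_lt hsuv (by omega)
  · show 2 * Fintype.card V * (σ u : ℕ) < 2 * Fintype.card V * ((ivl G σ f).1 : ℕ) + _
    exact mul_blk_lt (by omega) (by omega)
  · exact blk_le_mul (by omega) (by omega)
  · exact blk_lt (by omega) (by omega)

lemma sepXR (u v : V) (e f : G.edgeSet)
    (hub : σ u = (ivl G σ e).2) (hvd : σ v = (ivl G σ f).2) (hσ : σ u < σ v) :
    rkXR G σ (Sum.inl u) < rkXR G σ (Sum.inl v) ∧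
    rkXR G σ (Sum.inl u) < rkXR G σ (Sum.inr f) ∧
    rkXR G σ (Sum.inr e) < rkXR G σ (Sum.inl v) ∧
    rkXR G σ (Sum.inr e) < rkXR G σ (Sum.inr f) := by
  have hn : 0 < Fintype.card V := (σ u).pos
  have hab : ((ivl G σ e).1 : ℕ) < ((ivl G σ e).2 : ℕ) := ivl_lt G σ e
  have hcd : ((ivl G σ f).1 : ℕ) < ((ivl G σ f).2 : ℕ) := ivl_lt G σ f
  have hcn : ((ivl G σ f).1 : ℕ) < Fintype.card V := ((ivl G σ f).1).isLt
  have han : ((ivl G σ e).1 : ℕ) < Fintype.card V := ((ivl G σ e).1).isLt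
  have hb : (σ u : ℕ) = ((ivl G σ e).2 : ℕ) := congrArg Fin.val hub
  have hd : (σ v : ℕ) = ((ivl G σ f).2 : ℕ) := congrArg Fin.val hvd
  have hsuv : (σ u : ℕ) < (σ v : ℕ) := hσ
  refine ⟨?_, ?_, ?_, ?_⟩
  · exact mul_mul_lt hsuv (by omega)
  · show 2 * Fintype.card V * (σ u : ℕ) <
      2 * Fintype.card V * (((ivl G σ f).2 : ℕ) - 1) + _
    exact blk_le_lt (by omega) (by omega)
  · exact blk_le_mul (by omega) (by omega)
  · exact blk_lt (by omega) (by omega)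

lemma sepO (ℓ : CIdx G σ → ℕ)
    (hfwd : ∀ x y : CIdx G σ, CRel G σ x y → ℓ x < ℓ y)
    (u v : V) (e f : G.edgeSet)
    (hua : σ u = (ivl G σ e).1) (hvd : σ v = (ivl G σ f).2)
    (hlt : ℓ (φmap G σ e) < ℓ (φmap G σ f)) :
    rkO G σ ℓ (Sum.inl u) < rkO G σ ℓ (Sum.inl v) ∧
    rkO G σ ℓ (Sum.inl u) < rkO G σ ℓ (Sum.inr f) ∧
    rkO G σ ℓ (Sum.inr e) < rkO G σ ℓ (Sum.inl v) ∧
    rkO G σ ℓ (Sum.inr e) < rkO G σ ℓ (Sum.inr f) := by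
  have hn : 0 < Fintype.card V := (σ u).pos
  have hun : (σ u : ℕ) < Fintype.card V := (σ u).isLt
  have h1 : mxE G σ ℓ (σ u : ℕ) ≤ ℓ (φmap G σ e) := by
    apply mxE_le
    intro h hc
    have hrel : CRel G σ (φmap G σ h) (φmap G σ e) := by
      show ((ivl G σ h).2 : ℕ) ≤ ((ivl G σ e).1 : ℕ)
      rw [← congrArg Fin.val hua]
      exact hc
    exact hfwd _ _ hrel
  have h2 : ℓ (φmap G σ f) + 1 ≤ mxE G σ ℓ (σ v : ℕ) := by
    apply mxE_ge
    rw [congrArg Fin.val hvd]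
  refine ⟨?_, ?_, ?_, ?_⟩
  · exact blk_lt (by omega) (by omega)
  · show _ < 2 * Fintype.card V * (ℓ (φmap G σ f) + 1)
    exact blk_le_mul (by omega) (by omega)
  · show 2 * Fintype.card V * (ℓ (φmap G σ e) + 1) < _
    exact mul_blk_lt (by omega) (by omega)
  · exact mul_mul_lt (by omega) (by omega)

end Seps

section Final

variable {V : Type*} [Fintype V] (G : SimpleGraph V) (σ : V ≃ Fin (Fintype.card V))

noncomputable local instance : Fintype G.edgeSet := Fintype.ofFinite _

noncomputable def Ffam {m : ℕ} (L : Fin m → CIdx G σ → ℕ) :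
    Fin (m + 2) → V ⊕ G.edgeSet → ℕ := fun i =>
  Fin.lastCases (rkXR G σ) (fun j : Fin (m + 1) =>
    Fin.lastCases (rkXL G σ) (fun k : Fin m => rkO G σ (L k)) j) i

lemma Ffam_last {m : ℕ} (L : Fin m → CIdx G σ → ℕ) :
    Ffam G σ L (Fin.last (m + 1)) = rkXR G σ := by
  simp [Ffam]

lemma Ffam_mid {m : ℕ} (L : Fin m → CIdx G σ → ℕ) :
    Ffam G σ L ((Fin.last m).castSucc) = rkXL G σ := by
  simp [Ffam]

lemma Ffam_lo {m : ℕ} (L : Fin m → CIdx G σ → ℕ) (k : Fin m) :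
    Ffam G σ L (k.castSucc.castSucc) = rkO G σ (L k) := by
  simp [Ffam]

lemma Ffam_inj {m : ℕ} (L : Fin m → CIdx G σ → ℕ) (hinj : ∀ i, Function.Injective (L i)) :
    ∀ i, Function.Injective (Ffam G σ L i) := by
  intro i
  induction i using Fin.lastCases with
  | last => rw [Ffam_last]; exact rkXR_inj G σ
  | cast j =>
    induction j using Fin.lastCases with
    | last => rw [Ffam_mid]; exact rkXL_inj G σ
    | cast k => rw [Ffam_lo]; exact rkO_inj G σ _ (hinj k)

lemma one_sided {m : ℕ} (L : Fin m → CIdx G σ → ℕ) (hL : IsRealizer (CRel G σ) L)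
    (u v : V) (e f : G.edgeSet) (hu : u ∈ (e : Sym2 V)) (hv : v ∈ (f : Sym2 V))
    (hef : e ≠ f) (hσ : σ u < σ v) :
    ∃ i : Fin (m + 2),
      Ffam G σ L i (Sum.inl u) < Ffam G σ L i (Sum.inl v) ∧
      Ffam G σ L i (Sum.inl u) < Ffam G σ L i (Sum.inr f) ∧
      Ffam G σ L i (Sum.inr e) < Ffam G σ L i (Sum.inl v) ∧
      Ffam G σ L i (Sum.inr e) < Ffam G σ L i (Sum.inr f) := by
  rcases ivl_mem G σ f v hv with hvc | hvd
  · refine ⟨(Fin.last m).castSucc, ?_⟩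
    rw [Ffam_mid]
    exact sepXL G σ u v e f hu hσ hvc
  · rcases ivl_mem G σ e u hu with hua | hub
    · have hne : φmap G σ f ≠ φmap G σ e := fun h => hef (φmap_inj G σ h).symm
      have hnr : ¬ CRel G σ (φmap G σ f) (φmap G σ e) := by
        intro hcon
        have hc : ((ivl G σ f).2 : ℕ) ≤ ((ivl G σ e).1 : ℕ) := hcon
        have h1 : (σ u : ℕ) = ((ivl G σ e).1 : ℕ) := congrArg Fin.val hua
        have h2 : (σ v : ℕ) = ((ivl G σ f).2 : ℕ) := congrArg Fin.val hvd
        have h3 : (σ u : ℕ) < (σ v : ℕ) := hσ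
        omega
      have hex : ¬ ∀ i, L i (φmap G σ f) < L i (φmap G σ e) :=
        fun hall => hnr ((hL.2 _ _).mpr ⟨hne, hall⟩)
      push_neg at hex
      obtain ⟨k, hk⟩ := hex
      have hlt : L k (φmap G σ e) < L k (φmap G σ f) :=
        lt_of_le_of_ne hk (fun h => hne (hL.1 k h.symm))
      refine ⟨k.castSucc.castSucc, ?_⟩
      rw [Ffam_lo]
      exact sepO G σ (L k) (fun x y hxy => ((hL.2 x y).mp hxy).2 k) u v e f hua hvd hlt
    · refine ⟨Fin.last (m + 1), ?_⟩
      rw [Ffam_last]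
      exact sepXR G σ u v e f hub hvd hσ

lemma pair_sep {m : ℕ} (L : Fin m → CIdx G σ → ℕ) (hL : IsRealizer (CRel G σ) L)
    (u v : V) (e f : G.edgeSet) (hu : u ∈ (e : Sym2 V)) (hv : v ∈ (f : Sym2 V))
    (huv : u ≠ v) (hef : e ≠ f) :
    ∃ i : Fin (m + 2),
      (Ffam G σ L i (Sum.inl u) < Ffam G σ L i (Sum.inl v) ∧
       Ffam G σ L i (Sum.inl u) < Ffam G σ L i (Sum.inr f) ∧
       Ffam G σ L i (Sum.inr e) < Ffam G σ L i (Sum.inl v) ∧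
       Ffam G σ L i (Sum.inr e) < Ffam G σ L i (Sum.inr f)) ∨
      (Ffam G σ L i (Sum.inl v) < Ffam G σ L i (Sum.inl u) ∧
       Ffam G σ L i (Sum.inl v) < Ffam G σ L i (Sum.inr e) ∧
       Ffam G σ L i (Sum.inr f) < Ffam G σ L i (Sum.inl u) ∧
       Ffam G σ L i (Sum.inr f) < Ffam G σ L i (Sum.inr e)) := by
  have hne : σ u ≠ σ v := fun h => huv (σ.injective h)
  rcases hne.lt_or_gt with h | h
  · obtain ⟨i, hi⟩ := one_sided G σ L hL u v e f hu hv hef h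
    exact ⟨i, Or.inl hi⟩
  · obtain ⟨i, hi⟩ := one_sided G σ L hL v u f e hv hu hef.symm h
    exact ⟨i, Or.inr hi⟩

end Final

/-- For any bijection `σ : V(G) → [n]`, `π(G^{1/2}) ≤ dim(C_{G,σ}) + 2`. -/
theorem stmt5 {V : Type*} [Fintype V] (G : SimpleGraph V)
    (σ : V ≃ Fin (Fintype.card V)) :
    sepDim (subdiv G) ≤ orderDim (CRel G σ) + 2 := by
  classical
  haveI hfin : Finite (CIdx G σ) := by unfold CIdx; infer_instance
  have hirr : ∀ x : CIdx G σ, ¬ CRel G σ x x := by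
    intro x hx
    exact absurd (cidx_lt G σ x) (not_lt.mpr hx)
  have htr : ∀ {x y z : CIdx G σ}, CRel G σ x y → CRel G σ y z → CRel G σ x z := by
    intro x y z h1 h2
    exact le_trans h1 (le_trans (le_of_lt (cidx_lt G σ y)) h2)
  obtain ⟨m0, L0, hL0⟩ := exists_realizer (CRel G σ) hirr @htr
  have hne : {m : ℕ | ∃ L : Fin m → CIdx G σ → ℕ, IsRealizer (CRel G σ) L}.Nonempty :=
    ⟨m0, L0, hL0⟩
  have hmem : ∃ L : Fin (orderDim (CRel G σ)) → CIdx G σ → ℕ, IsRealizer (CRel G σ) L :=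
    Nat.sInf_mem hne
  obtain ⟨L, hL⟩ := hmem
  have hsf : SepFamily (subdiv G) (Ffam G σ L) := by
    refine ⟨Ffam_inj G σ L hL.1, ?_⟩
    intro a b c d hab hcd hac had hbc hbd
    simp only [subdiv, SimpleGraph.fromRel_adj] at hab hcd
    obtain ⟨-, hab⟩ := hab
    obtain ⟨-, hcd⟩ := hcd
    rcases hab with ⟨u, e, rfl, rfl, hue⟩ | ⟨u, e, rfl, rfl, hue⟩ <;>
      rcases hcd with ⟨v, f, rfl, rfl, hvf⟩ | ⟨v, f, rfl, rfl, hvf⟩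
    · obtain ⟨i, hi⟩ := pair_sep G σ L hL u v e f hue hvf
        (fun h => hac (congrArg Sum.inl h)) (fun h => hbd (congrArg Sum.inr h))
      exact ⟨i, by tauto⟩
    · obtain ⟨i, hi⟩ := pair_sep G σ L hL u v e f hue hvf
        (fun h => had (congrArg Sum.inl h)) (fun h => hbc (congrArg Sum.inr h))
      exact ⟨i, by tauto⟩
    · obtain ⟨i, hi⟩ := pair_sep G σ L hL u v e f hue hvf
        (fun h => hbc (congrArg Sum.inl h)) (fun h => had (congrArg Sum.inr h))
      exact ⟨i, by tauto⟩
    · obtain ⟨i, hi⟩ := pair_sep G σ L hL u v e f hue hvf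
        (fun h => hbd (congrArg Sum.inl h)) (fun h => hac (congrArg Sum.inr h))
      exact ⟨i, by tauto⟩
  exact Nat.sInf_le ⟨Ffam G σ L, hsf⟩
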